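/- arXiv:1311.2648 — 6 statements merged into one kernel-verified Lean document; each statement's English description precedes it below -/
import Mathlib

section
/- Let G be an abelian group and F a self-indulgent downward directed family of subsets of G such that for every g ∈ G with g ≠ 0 and every integer n ≥ 1 there exists S ∈ F with g ∉ n·S*. Suppose g ∈ G with g ≠ 0, n ≥ 0, and S₀, …, S_{n−1} are members of F such that g ∉ S₀* + ⋯ + S_{n−1}*. Then there exists S_n ∈ F such that g ∉ S₀* + ⋯ + S_{n−1}* + S_n*. -/
open Pointwise

/-- `S* = S ∪ {0} ∪ (-S)`. -/
def Sstar {G : Type*} [AddCommGroup G] (S : Set G) : Set G := S ∪ {0} ∪ (-S)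

/-- `F` is downward directed. -/
def DownDirected {G : Type*} [AddCommGroup G] (F : Set (Set G)) : Prop :=
  ∀ S₁ ∈ F, ∀ S₂ ∈ F, ∃ S₃ ∈ F, S₃ ⊆ S₁ ∩ S₂

/-- `F'` is a downward cofinal subset of `F` (ordered by inclusion). -/
def DownCofinal {G : Type*} [AddCommGroup G] (F' F : Set (Set G)) : Prop :=
  F' ⊆ F ∧ ∀ S ∈ F, ∃ T ∈ F', T ⊆ S

/-- The family `(x T)_{T ∈ F''}`, indexed by `F''` ordered (downward) by inclusion,
converges strongly to `a` with respect to `F`. -/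
def ConvStrong {G : Type*} [AddCommGroup G] (F F'' : Set (Set G)) (x : Set G → G)
    (a : G) : Prop :=
  ∀ S ∈ F, ∃ T ∈ F'', ∀ T' ∈ F'', T' ⊆ T → x T' - a ∈ Sstar S

/-- `F` is self-indulgent. -/
def SelfIndulgent {G : Type*} [AddCommGroup G] (F : Set (Set G)) : Prop :=
  ∀ S ∈ F, ∀ F' : Set (Set G), DownCofinal F' F →
    ∀ x : Set G → G, (∀ T ∈ F', x T ∈ Sstar S) →
      ∃ a ∈ Sstar S, ∃ F'' : Set (Set G), DownCofinal F'' F' ∧ ConvStrong F F'' x a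

section Aux

variable {G : Type*} [AddCommGroup G]

lemma zero_mem_sstar (S : Set G) : (0 : G) ∈ Sstar S := Or.inl (Or.inr rfl)

lemma neg_mem_sstar {S : Set G} {x : G} (hx : x ∈ Sstar S) : -x ∈ Sstar S := by
  rcases hx with (h | h) | h
  · exact Or.inr (by simpa using h)
  · exact Or.inl (Or.inr (by simp_all))
  · exact Or.inl (Or.inl (by simpa using h))

lemma sstar_mono {S T : Set G} (h : S ⊆ T) : Sstar S ⊆ Sstar T := by
  rintro x ((hx | hx) | hx)
  · exact Or.inl (Or.inl (h hx))
  · exact Or.inl (Or.inr hx)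
  · exact Or.inr (Set.neg_subset_neg.2 h hx)

lemma downCofinal_trans {F'' F' F : Set (Set G)} (h1 : DownCofinal F'' F')
    (h2 : DownCofinal F' F) : DownCofinal F'' F := by
  refine ⟨h1.1.trans h2.1, fun U hU => ?_⟩
  obtain ⟨T, hT, hTU⟩ := h2.2 U hU
  obtain ⟨T', hT', hT'T⟩ := h1.2 T hT
  exact ⟨T', hT', hT'T.trans hTU⟩

/-- a downward cofinal subfamily of a directed family contains elements below any
two members of `F`. -/
lemma downCofinal_pair {F' F : Set (Set G)} (hdir : DownDirected F)
    (hcof : DownCofinal F' F) {T₁ T₂ : Set G} (h1 : T₁ ∈ F) (h2 : T₂ ∈ F) :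
    ∃ T ∈ F', T ⊆ T₁ ∧ T ⊆ T₂ := by
  obtain ⟨V, hV, hVsub⟩ := hdir T₁ h1 T₂ h2
  obtain ⟨T, hT, hTV⟩ := hcof.2 V hV
  exact ⟨T, hT, hTV.trans (hVsub.trans Set.inter_subset_left),
    hTV.trans (hVsub.trans Set.inter_subset_right)⟩

/-- common lower bounds of finitely many members of `F`. -/
lemma directed_fin_lower {F : Set (Set G)} (hdir : DownDirected F) :
    ∀ (m : ℕ) (f : Fin m → Set G), (∀ i, f i ∈ F) → ∀ B ∈ F,
      ∃ V ∈ F, V ⊆ B ∧ ∀ i, V ⊆ f i := by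
  intro m
  induction m with
  | zero => exact fun f _ B hB => ⟨B, hB, le_refl _, fun i => i.elim0⟩
  | succ m ih =>
    intro f hf B hB
    obtain ⟨V', hV', hV'B, hV'f⟩ := ih (fun i => f i.castSucc) (fun i => hf _) B hB
    obtain ⟨V, hV, hVsub⟩ := hdir V' hV' (f (Fin.last m)) (hf _)
    refine ⟨V, hV, (hVsub.trans Set.inter_subset_left).trans hV'B, fun i => ?_⟩
    refine Fin.lastCases ?_ (fun j => ?_) i
    · exact hVsub.trans Set.inter_subset_right
    · exact (hVsub.trans Set.inter_subset_left).trans (hV'f j)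

/-- Iterated self-indulgence: finitely many nets can be made to converge
simultaneously (on a common downward cofinal subfamily). -/
lemma multi_converge {F : Set (Set G)} (hdir : DownDirected F) (hsi : SelfIndulgent F) :
    ∀ (m : ℕ) (F' : Set (Set G)), DownCofinal F' F →
      ∀ (S : Fin m → Set G), (∀ i, S i ∈ F) →
      ∀ (y : Fin m → Set G → G), (∀ T ∈ F', ∀ i, y i T ∈ Sstar (S i)) →
      ∃ a : Fin m → G, (∀ i, a i ∈ Sstar (S i)) ∧
        ∃ F'' : Set (Set G), DownCofinal F'' F' ∧
          ∀ U ∈ F, ∃ T ∈ F'', ∀ T' ∈ F'', T' ⊆ T → ∀ i, y i T' - a i ∈ Sstar U := by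
  intro m
  induction m with
  | zero =>
    intro F' hF' S hS y hy
    refine ⟨fun i => i.elim0, fun i => i.elim0, F', ⟨le_refl _, fun U hU => ⟨U, hU, le_refl _⟩⟩,
      fun U hU => ?_⟩
    obtain ⟨T, hT, _⟩ := hF'.2 U hU
    exact ⟨T, hT, fun T' _ _ i => i.elim0⟩
  | succ m ih =>
    intro F' hF' S hS y hy
    obtain ⟨aL, haL, F₁, hF₁, hconvL⟩ :=
      hsi (S (Fin.last m)) (hS _) F' hF' (y (Fin.last m)) (fun T hT => hy T hT _)
    obtain ⟨a', ha', F'', hF'', hconv'⟩ :=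
      ih F₁ (downCofinal_trans hF₁ hF') (fun i => S i.castSucc) (fun i => hS _)
        (fun i => y i.castSucc) (fun T hT i => hy T (hF₁.1 hT) _)
    refine ⟨Fin.snoc a' aL, fun i => ?_, F'', downCofinal_trans hF'' hF₁, fun U hU => ?_⟩
    · refine Fin.lastCases ?_ (fun j => ?_) i
      · simpa using haL
      · simpa using ha' j
    · obtain ⟨T₁, hT₁, hprop₁⟩ := hconvL U hU
      obtain ⟨T₂, hT₂, hprop₂⟩ := hconv' U hU
      have hT₁F : T₁ ∈ F := hF'.1 (hF₁.1 hT₁)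
      have hT₂F : T₂ ∈ F := hF'.1 (hF₁.1 (hF''.1 hT₂))
      have hcofF : DownCofinal F'' F :=
        downCofinal_trans hF'' (downCofinal_trans hF₁ hF')
      obtain ⟨T, hT, hTsub₁, hTsub₂⟩ := downCofinal_pair hdir hcofF hT₁F hT₂F
      refine ⟨T, hT, fun T' hT' hT'T i => ?_⟩
      refine Fin.lastCases ?_ (fun j => ?_) i
      · simpa using hprop₁ T' (hF''.1 hT') (hT'T.trans hTsub₁)
      · simpa using hprop₂ T' hT' (hT'T.trans hTsub₂) j

end Aux

theorem stmt2 {G : Type*} [AddCommGroup G] (F : Set (Set G))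
    (hdir : DownDirected F) (hsi : SelfIndulgent F)
    (hcond : ∀ g : G, g ≠ 0 → ∀ n : ℕ, 1 ≤ n →
      ∃ S ∈ F, g ∉ ∑ _i ∈ Finset.range n, Sstar S)
    (g : G) (hg : g ≠ 0) (n : ℕ) (S : Fin n → Set G) (hS : ∀ i, S i ∈ F)
    (hgnot : g ∉ ∑ i : Fin n, Sstar (S i)) :
    ∃ Sn ∈ F, g ∉ (∑ i : Fin n, Sstar (S i)) + Sstar Sn := by
  by_contra hcon
  push_neg at hcon
  -- some member W of F
  obtain ⟨W, hW, -⟩ := hcond g hg 1 le_rfl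
  -- the cofinal family of members below W and all the S i
  set F₀ : Set (Set G) := {T | T ∈ F ∧ T ⊆ W ∧ ∀ i, T ⊆ S i} with hF₀def
  have hF₀ : DownCofinal F₀ F := by
    refine ⟨fun T hT => hT.1, fun U hU => ?_⟩
    obtain ⟨V, hV, hVW, hVS⟩ := directed_fin_lower hdir n S hS W hW
    obtain ⟨V', hV', hV'sub⟩ := hdir V hV U hU
    exact ⟨V', ⟨hV', (hV'sub.trans Set.inter_subset_left).trans hVW,
      fun i => (hV'sub.trans Set.inter_subset_left).trans (hVS i)⟩,
      hV'sub.trans Set.inter_subset_right⟩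
  -- decompositions g = ∑ y i T with y i T ∈ Sstar (S i), y last T ∈ Sstar T
  have hdec : ∀ T : Set G, ∃ y : Fin (n + 1) → G,
      T ∈ F₀ → (∀ i : Fin n, y i.castSucc ∈ Sstar (S i)) ∧ y (Fin.last n) ∈ Sstar T ∧
        ∑ i, y i = g := by
    intro T
    by_cases hT : T ∈ F₀
    · have hgT : g ∈ (∑ i : Fin n, Sstar (S i)) + Sstar T := hcon T hT.1
      rw [Set.mem_add] at hgT
      obtain ⟨c, hc, x, hx, hcx⟩ := hgT
      rw [Set.mem_fintype_sum] at hc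
      obtain ⟨z, hz, hzsum⟩ := hc
      refine ⟨Fin.snoc z x, fun _ => ⟨fun i => by simpa using hz i, by simpa using hx, ?_⟩⟩
      rw [Fin.sum_univ_castSucc]
      simp [hzsum, hcx]
    · exact ⟨0, fun h => absurd h hT⟩
  choose Y hY using hdec
  -- apply iterated self-indulgence
  have hmain := multi_converge hdir hsi (n + 1) F₀ hF₀ (Fin.snoc S W)
      (fun i => Fin.lastCases (by simpa using hW) (fun j => by simpa using hS j) i)
      (fun i T => Y T i) ?_
  · obtain ⟨a, ha, F'', hF'', hconv⟩ := hmain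
    have hF''F : DownCofinal F'' F := downCofinal_trans hF'' hF₀
    -- step 1 : g = ∑ a i
    have hsum : g = ∑ i, a i := by
      by_contra hne
      have hne' : g - ∑ i, a i ≠ 0 := sub_ne_zero.2 hne
      obtain ⟨U, hU, hUnot⟩ := hcond _ hne' (n + 1) (by omega)
      obtain ⟨T, hT, hprop⟩ := hconv U hU
      have hTF₀ : T ∈ F₀ := hF''.1 hT
      have hmem : ∀ i, Y T i - a i ∈ Sstar U := hprop T hT (le_refl _)
      have hsumY : ∑ i, Y T i = g := (hY T hTF₀).2.2
      have : g - ∑ i, a i ∈ ∑ _i : Fin (n + 1), Sstar U := by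
        have := Set.finset_sum_mem_finset_sum (Finset.univ : Finset (Fin (n + 1)))
          (fun _ => Sstar U) (fun i => Y T i - a i) (fun i _ => hmem i)
        simpa [Finset.sum_sub_distrib, hsumY] using this
      rw [Fin.sum_univ_eq_sum_range (fun _ => Sstar U) (n + 1)] at this
      exact hUnot this
    -- step 2 : a (last) = 0
    have hlast : a (Fin.last n) = 0 := by
      by_contra hne
      obtain ⟨U, hU, hUnot⟩ := hcond _ hne 2 (by omega)
      obtain ⟨T, hT, hprop⟩ := hconv U hU
      have hTF : T ∈ F := hF''F.1 hT
      obtain ⟨T', hT', hT'T, hT'U⟩ := downCofinal_pair hdir hF''F hTF hU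
      have hT'F₀ : T' ∈ F₀ := hF''.1 hT'
      have h1 : Y T' (Fin.last n) ∈ Sstar U :=
        sstar_mono hT'U ((hY T' hT'F₀).2.1)
      have h2 : Y T' (Fin.last n) - a (Fin.last n) ∈ Sstar U :=
        hprop T' hT' hT'T (Fin.last n)
      have : a (Fin.last n) ∈ Sstar U + Sstar U := by
        refine ⟨Y T' (Fin.last n), h1, -(Y T' (Fin.last n) - a (Fin.last n)),
          neg_mem_sstar h2, by show _ + _ = _; rw [← sub_eq_add_neg, sub_sub_cancel]⟩
      apply hUnot
      have : a (Fin.last n) ∈ ∑ _i : Fin 2, Sstar U := by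
        rw [Fin.sum_univ_two]; exact this
      rwa [Fin.sum_univ_eq_sum_range (fun _ => Sstar U) 2] at this
    -- conclude : g ∈ ∑ Sstar (S i), contradiction
    apply hgnot
    have hgsum : g = ∑ i : Fin n, a i.castSucc := by
      rw [hsum, Fin.sum_univ_castSucc, hlast, add_zero]
    rw [hgsum]
    exact Set.finset_sum_mem_finset_sum Finset.univ _ _
      (fun i _ => by simpa using ha i.castSucc)
  · -- the hypotheses of multi_converge on the Y family
    intro T hT i
    refine Fin.lastCases ?_ (fun j => ?_) i
    · have := (hY T hT).2.1
      simpa using sstar_mono hT.2.1 this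
    · simpa using (hY T hT).1 j
end

section
/- Let G be the direct product group ∏_{n≥1} ℤ/nℤ, and for each integer m ≥ 1 let S(m) ⊆ G be the set of all elements whose i-th coordinate, for each 1 ≤ i ≤ m, lies in the image of {−1, 0, 1} in ℤ/iℤ (coordinates beyond the m-th being unrestricted). Then for every sequence m₀, m₁, m₂, … of positive integers, the sumset S(m₀)* + S(m₁)* + ⋯ + S(m_{m₀})* (with m₀ + 1 summands) equals all of G. -/
open Pointwise

/-- The direct product group `∏_{n ≥ 1} ℤ/nℤ`. -/
abbrev Gprod : Type := ∀ i : ℕ+, ZMod i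

/-- `S(m)`: the set of elements of `∏_{n ≥ 1} ℤ/nℤ` whose `i`-th coordinate, for
`1 ≤ i ≤ m`, lies in the image of `{-1, 0, 1}` in `ℤ/iℤ`. -/
def Sm (m : ℕ+) : Set Gprod :=
  {g | ∀ i : ℕ+, i ≤ m → g i ∈ ({-1, 0, 1} : Set (ZMod i))}

theorem stmt5 (m : ℕ → ℕ+) :
    (∑ i ∈ Finset.range ((m 0 : ℕ) + 1), Sstar (Sm (m i))) = (Set.univ : Set Gprod) := by
  classical
  ext g
  simp only [Set.mem_univ, iff_true]
  rw [Set.mem_finset_sum]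
  set N := (m 0 : ℕ) + 1 with hN
  refine ⟨fun i k => if (k : ℕ) ≤ (m 0 : ℕ) then (if i < (g k).val then 1 else 0)
      else (if i = 0 then g k else 0), fun {i} _ => ?_, ?_⟩
  · refine Or.inl (Or.inl ?_)
    intro k hk
    by_cases h : (k : ℕ) ≤ (m 0 : ℕ)
    · simp only [h, if_true]
      split <;> simp
    · simp only [h, if_false]
      split
      · rename_i h0
        subst h0
        exact absurd ((PNat.coe_le_coe _ _).2 hk) h
      · simp
  · funext k
    haveI : NeZero (k : ℕ) := ⟨k.ne_zero⟩
    rw [Finset.sum_apply]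
    by_cases h : (k : ℕ) ≤ (m 0 : ℕ)
    · simp only [h, if_true]
      have hval : (g k).val < N := lt_of_lt_of_le (ZMod.val_lt (g k)) (by omega)
      have : ∀ i ∈ Finset.range N, (if i < (g k).val then (1 : ZMod k) else 0)
          = if i ∈ Finset.range (g k).val then 1 else 0 := by
        intro i _; simp [Finset.mem_range]
      rw [Finset.sum_congr rfl this, Finset.sum_ite_mem,
        Finset.inter_eq_right.2 (Finset.range_subset_range.2 hval.le), Finset.sum_const,
        Finset.card_range, nsmul_eq_mul, mul_one, ZMod.natCast_val, ZMod.cast_id]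
    · simp only [h, if_false]
      rw [Finset.sum_ite_eq' (Finset.range N) 0 (fun _ => g k)]
      simp [hN]
end

section
/- Let G be the direct product group ∏_{n≥1} ℤ/nℤ, and for each integer m ≥ 1 let S(m) ⊆ G be the set of all elements whose i-th coordinate, for each 1 ≤ i ≤ m, lies in the image of {−1, 0, 1} in ℤ/iℤ. Then ⋃_{n≥1} ⋂_{m≥1} n·S(m)* is a proper subset of G; in fact every element g of this union has the property that, for some fixed n, every coordinate of g is the residue of an integer of absolute value at most n, and such elements form a proper subgroup of G. -/
open Pointwise

/-- The set of elements `g` such that, for some fixed `n`, every coordinate of `g`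
is the residue of an integer of absolute value at most `n`. -/
def Bounded : Set Gprod :=
  {g | ∃ n : ℕ, ∀ i : ℕ+, ∃ a : ℤ, |a| ≤ (n : ℤ) ∧ g i = (a : ZMod i)}

lemma sstar_coord {m : ℕ+} {g : Gprod} (hg : g ∈ Sstar (Sm m)) (i : ℕ+) (hi : i ≤ m) :
    ∃ a : ℤ, |a| ≤ 1 ∧ g i = (a : ZMod i) := by
  rcases hg with (hg | hg) | hg
  · rcases hg i hi with (h | h | h)
    · exact ⟨-1, by norm_num, by simpa using h⟩
    · exact ⟨0, by norm_num, by simpa using h⟩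
    · exact ⟨1, by norm_num, by simpa using h⟩
  · exact ⟨0, by norm_num, by simp [Set.eq_of_mem_singleton hg]⟩
  · rcases (Set.mem_neg.mp hg) i hi with (h | h | h)
    · refine ⟨1, by norm_num, ?_⟩
      have : (-g) i = -1 := h
      have := neg_eq_iff_eq_neg.mp this
      simp [this]
    · refine ⟨0, by norm_num, ?_⟩
      have : (-g) i = 0 := h
      have : -(g i) = 0 := this
      simpa using neg_eq_zero.mp this
    · refine ⟨-1, by norm_num, ?_⟩
      have : -(g i) = 1 := h
      have : g i = -1 := by linear_combination -this
      simp [this]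

lemma sum_coord {m : ℕ+} (n : ℕ) {g : Gprod}
    (hg : g ∈ ∑ _i ∈ Finset.range n, Sstar (Sm m)) (i : ℕ+) (hi : i ≤ m) :
    ∃ a : ℤ, |a| ≤ (n : ℤ) ∧ g i = (a : ZMod i) := by
  induction n generalizing g with
  | zero =>
    simp only [Finset.range_zero, Finset.sum_empty] at hg
    have : g = 0 := by simpa using hg
    exact ⟨0, by norm_num, by simp [this]⟩
  | succ k ih =>
    rw [Finset.sum_range_succ] at hg
    rcases Set.mem_add.mp hg with ⟨x, hx, y, hy, hxy⟩
    rcases ih hx with ⟨a, ha, hax⟩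
    rcases sstar_coord hy i hi with ⟨b, hb, hby⟩
    refine ⟨a + b, ?_, ?_⟩
    · calc |a + b| ≤ |a| + |b| := abs_add_le a b
        _ ≤ (k : ℤ) + 1 := add_le_add ha hb
        _ = ((k + 1 : ℕ) : ℤ) := by push_cast; ring
    · have : g i = x i + y i := by rw [← hxy]; rfl
      rw [this, hax, hby]; push_cast; ring

theorem stmt6 :
    (⋃ (n : ℕ) (_ : 1 ≤ n), ⋂ m : ℕ+, ∑ _i ∈ Finset.range n, Sstar (Sm m)) ≠ Set.univ ∧
    (⋃ (n : ℕ) (_ : 1 ≤ n), ⋂ m : ℕ+, ∑ _i ∈ Finset.range n, Sstar (Sm m)) ⊆ Bounded ∧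
    (∃ H : AddSubgroup Gprod, (H : Set Gprod) = Bounded) ∧
    Bounded ≠ Set.univ := by
  have hsub : (⋃ (n : ℕ) (_ : 1 ≤ n), ⋂ m : ℕ+, ∑ _i ∈ Finset.range n, Sstar (Sm m))
      ⊆ Bounded := by
    intro g hg
    simp only [Set.mem_iUnion] at hg
    rcases hg with ⟨n, _, hg⟩
    refine ⟨n, fun i => ?_⟩
    exact sum_coord n (Set.mem_iInter.mp hg i) i le_rfl
  have hBne : Bounded ≠ Set.univ := by
    intro h
    set g : Gprod := fun i => (((i : ℕ) / 2 : ℕ) : ZMod i) with hgdef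
    have hgB : g ∈ Bounded := h ▸ Set.mem_univ g
    rcases hgB with ⟨n, hn⟩
    set i : ℕ+ := ⟨2 * n + 2, by omega⟩ with hidef
    rcases hn i with ⟨a, ha, hai⟩
    have hgi : g i = (((n : ℤ) + 1 : ℤ) : ZMod i) := by
      show (((2 * n + 2) / 2 : ℕ) : ZMod (2 * n + 2)) = _
      have : (2 * n + 2) / 2 = n + 1 := by omega
      rw [this]; push_cast; rfl
    have heq : ((a : ℤ) : ZMod ((i : ℕ))) = (((n : ℤ) + 1 : ℤ) : ZMod ((i : ℕ))) := by
      rw [← hai, hgi]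
    have hmod : a ≡ (n : ℤ) + 1 [ZMOD ((i : ℕ) : ℤ)] :=
      (ZMod.intCast_eq_intCast_iff' a ((n : ℤ) + 1) (i : ℕ)).mp heq
    have hdvd : ((i : ℕ) : ℤ) ∣ ((n : ℤ) + 1 - a) := Int.ModEq.dvd hmod
    have hiℤ : ((i : ℕ) : ℤ) = 2 * n + 2 := by simp [hidef]
    rw [hiℤ] at hdvd
    have habs : |(n : ℤ) + 1 - a| < 2 * n + 2 := by
      rw [abs_le] at ha
      rw [abs_lt]
      constructor <;> linarith [ha.1, ha.2]
    have : (n : ℤ) + 1 - a = 0 := Int.eq_zero_of_abs_lt_dvd hdvd habs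
    rw [abs_le] at ha
    omega
  refine ⟨?_, hsub, ?_, hBne⟩
  · intro h
    exact hBne (Set.eq_univ_of_univ_subset (h ▸ hsub))
  · refine ⟨{ carrier := Bounded
              zero_mem' := ⟨0, fun i => ⟨0, by norm_num, by simp⟩⟩
              add_mem' := ?_
              neg_mem' := ?_ }, rfl⟩
    · rintro x y ⟨n, hn⟩ ⟨k, hk⟩
      refine ⟨n + k, fun i => ?_⟩
      rcases hn i with ⟨a, ha, hax⟩
      rcases hk i with ⟨b, hb, hby⟩
      refine ⟨a + b, ?_, ?_⟩
      · calc |a + b| ≤ |a| + |b| := abs_add_le a b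
          _ ≤ (n : ℤ) + k := add_le_add ha hb
          _ = ((n + k : ℕ) : ℤ) := by push_cast; ring
      · show x i + y i = _
        rw [hax, hby]; push_cast; ring
    · rintro x ⟨n, hn⟩
      refine ⟨n, fun i => ?_⟩
      rcases hn i with ⟨a, ha, hax⟩
      refine ⟨-a, by simpa using ha, ?_⟩
      show -(x i) = _
      rw [hax]; push_cast; ring
end

section
/- For each integer k ≥ 1, let S(k) = {x ∈ ℤ : x ≡ 0 (mod 3^k) or x² ≡ 7 (mod 3^k)}. Then for every g ∈ ℤ with g ≠ 0 and every integer n ≥ 1, there exists k ≥ 1 such that g does not lie in the n-fold sumset n·S(k)* = S(k)* + ⋯ + S(k)*. -/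
open Pointwise

/-- `S(k) = {x ∈ ℤ : x ≡ 0 (mod 3^k) or x² ≡ 7 (mod 3^k)}`. -/
def SZ (k : ℕ) : Set ℤ :=
  {x : ℤ | ((3 : ℤ) ^ k ∣ x) ∨ Int.ModEq ((3 : ℤ) ^ k) (x ^ 2) 7}

/-- Descent: `g² = 7a²` forces `a = 0`. -/
lemma seven_descent : ∀ m : ℕ, ∀ a g : ℤ, a.natAbs = m → g ^ 2 = 7 * a ^ 2 → a = 0 := by
  intro m
  induction m using Nat.strong_induction_on with
  | _ m ih =>
    intro a g hm h
    have h7 : Prime (7 : ℤ) := by norm_num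
    have hg7 : (7 : ℤ) ∣ g := by
      have : (7 : ℤ) ∣ g ^ 2 := ⟨a ^ 2, h⟩
      exact h7.dvd_of_dvd_pow this
    obtain ⟨h1, rfl⟩ := hg7
    have ha7 : (7 : ℤ) ∣ a := by
      have : (7 : ℤ) ∣ a ^ 2 := by
        have : 7 * a ^ 2 = 7 * (7 * h1 ^ 2) := by ring_nf; linarith [h]
        exact ⟨h1 ^ 2, by linarith [mul_left_cancel₀ (by norm_num : (7:ℤ) ≠ 0) this]⟩
      exact h7.dvd_of_dvd_pow this
    obtain ⟨b, rfl⟩ := ha7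
    rcases eq_or_ne b 0 with rfl | hb
    · ring
    · have hb0 : b.natAbs < m := by
        subst hm
        have : b.natAbs < 7 * b.natAbs := by
          have := Int.natAbs_pos.mpr hb
          omega
        simpa [Int.natAbs_mul] using this
      have h2 : h1 ^ 2 = 7 * b ^ 2 := by nlinarith [h]
      have := ih b.natAbs hb0 b h1 rfl h2
      simp [this]

lemma mem_sstar_cases {k : ℕ} {x : ℤ} (hx : x ∈ Sstar (SZ k)) :
    ((3 : ℤ) ^ k ∣ x) ∨ ((3 : ℤ) ^ k ∣ x ^ 2 - 7) := by
  rcases hx with (hx | hx) | hx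
  · rcases hx with h | h
    · exact Or.inl h
    · exact Or.inr ((Int.modEq_iff_dvd.mp h.symm))
  · simp only [Set.mem_singleton_iff] at hx; subst hx; exact Or.inl (dvd_zero _)
  · rcases (Set.mem_neg.mp hx) with h | h
    · exact Or.inl (dvd_neg.mp h)
    · refine Or.inr ?_
      have := Int.modEq_iff_dvd.mp h.symm
      simpa using this

theorem stmt7 :
    ∀ g : ℤ, g ≠ 0 → ∀ n : ℕ, 1 ≤ n →
      ∃ k : ℕ, 1 ≤ k ∧ g ∉ ∑ _i ∈ Finset.range n, Sstar (SZ k) := by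
  intro g hg n hn
  set k : ℕ := g.natAbs ^ 2 + 7 * n ^ 2 + 1 with hk
  refine ⟨k, by omega, ?_⟩
  intro hmem
  set P : ℤ := (3 : ℤ) ^ k with hP
  have hPbig : g ^ 2 + 7 * (n : ℤ) ^ 2 < P := by
    have h1 : k < 3 ^ k := Nat.lt_pow_self (by norm_num : 1 < 3)
    have h2 : g.natAbs ^ 2 + 7 * n ^ 2 < 3 ^ k := by omega
    have h3 : ((g.natAbs : ℤ)) ^ 2 = g ^ 2 := by
      rw [sq, sq]; exact_mod_cast Int.natAbs_mul_self
    calc g ^ 2 + 7 * (n : ℤ) ^ 2 = ((g.natAbs ^ 2 + 7 * n ^ 2 : ℕ) : ℤ) := by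
          push_cast [h3, sq_abs]; ring
      _ < ((3 ^ k : ℕ) : ℤ) := by exact_mod_cast h2
      _ = P := by push_cast [hP]; norm_num
  obtain ⟨f, hf, hsum⟩ := (Set.mem_finset_sum (Finset.range n) _ g).mp hmem
  have hcases : ∀ i ∈ Finset.range n, (P ∣ f i) ∨ (P ∣ (f i) ^ 2 - 7) :=
    fun i hi => mem_sstar_cases (hf hi)
  by_cases hex : ∃ i ∈ Finset.range n, P ∣ (f i) ^ 2 - 7 ∧ ¬ P ∣ f i
  · obtain ⟨i0, hi0, hr, -⟩ := hex
    set r : ℤ := f i0 with hrdef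
    have h3P : (3 : ℤ) ∣ P := dvd_pow_self 3 (by omega)
    have h3r : ¬ (3 : ℤ) ∣ r := by
      intro h3
      have hd : (3 : ℤ) ∣ r ^ 2 - 7 := h3P.trans hr
      have hsq : (3 : ℤ) ∣ r ^ 2 := dvd_pow h3 two_ne_zero
      have : (3 : ℤ) ∣ 7 := by
        have h7 : (7 : ℤ) = r ^ 2 - (r ^ 2 - 7) := by ring
        rw [h7]
        exact dvd_sub hsq hd
      norm_num at this
    have h3prime : Prime (3 : ℤ) := by norm_num
    have H : ∀ i ∈ Finset.range n, ∃ e : ℤ, |e| ≤ 1 ∧ P ∣ f i - e * r := by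
      intro i hi
      rcases hcases i hi with h | h
      · exact ⟨0, by norm_num, by simpa using h⟩
      · have hprod : P ∣ (f i - r) * (f i + r) := by
          have : (f i - r) * (f i + r) = (f i ^ 2 - 7) - (r ^ 2 - 7) := by ring
          rw [this]; exact dvd_sub h hr
        by_cases h3m : (3 : ℤ) ∣ (f i + r)
        · -- then 3 does not divide f i - r
          have h3nm : ¬ (3 : ℤ) ∣ (f i - r) := by
            intro hc
            apply h3r
            have : (3 : ℤ) ∣ 2 * r := by
              have : 2 * r = (f i + r) - (f i - r) := by ring
              rw [this]; exact dvd_sub h3m hc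
            rcases h3prime.dvd_mul.mp this with h | h
            · norm_num at h
            · exact h
          have hcop : IsCoprime P (f i - r) :=
            ((h3prime.coprime_iff_not_dvd.mpr h3nm).pow_left)
          refine ⟨-1, by norm_num, ?_⟩
          have hprod' : P ∣ (f i + r) * (f i - r) := by rwa [mul_comm] at hprod
          have := hcop.dvd_of_dvd_mul_right hprod'
          have heq : f i - (-1) * r = f i + r := by ring
          rwa [heq]
        · have hcop : IsCoprime P (f i + r) :=
            ((h3prime.coprime_iff_not_dvd.mpr h3m).pow_left)
          refine ⟨1, by norm_num, ?_⟩
          have := hcop.dvd_of_dvd_mul_right hprod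
          simpa using this
    choose! e he1 he2 using H
    set a : ℤ := ∑ i ∈ Finset.range n, e i with ha
    have hga : P ∣ g - a * r := by
      have hdvd : P ∣ ∑ i ∈ Finset.range n, (f i - e i * r) :=
        Finset.dvd_sum (fun i hi => he2 i hi)
      have heq : ∑ i ∈ Finset.range n, (f i - e i * r) = g - a * r := by
        rw [Finset.sum_sub_distrib, hsum, ← Finset.sum_mul]
      rwa [heq] at hdvd
    have haLe : |a| ≤ (n : ℤ) := by
      calc |a| ≤ ∑ i ∈ Finset.range n, |e i| := Finset.abs_sum_le_sum_abs _ _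
        _ ≤ ∑ _i ∈ Finset.range n, 1 := Finset.sum_le_sum (fun i hi => he1 i hi)
        _ = n := by simp
    have hdvd2 : P ∣ g ^ 2 - 7 * a ^ 2 := by
      have hstep : P ∣ (g - a * r) * (g + a * r) + a ^ 2 * (r ^ 2 - 7) :=
        dvd_add (hga.mul_right _) (hr.mul_left _)
      have heq : (g - a * r) * (g + a * r) + a ^ 2 * (r ^ 2 - 7) = g ^ 2 - 7 * a ^ 2 := by
        ring
      rwa [heq] at hstep
    have ha2 : a ^ 2 ≤ (n : ℤ) ^ 2 := by nlinarith [abs_nonneg a, sq_abs a]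
    have hzero : g ^ 2 - 7 * a ^ 2 = 0 := by
      refine Int.eq_zero_of_abs_lt_dvd hdvd2 ?_
      have habs : |g ^ 2 - 7 * a ^ 2| ≤ g ^ 2 + 7 * a ^ 2 := by
        apply abs_le.mpr
        constructor <;> nlinarith [sq_nonneg a, sq_nonneg g]
      nlinarith
    have ha0 : a = 0 := seven_descent a.natAbs a g rfl (by linarith)
    have hg2 : g ^ 2 = 0 := by rw [ha0] at hzero; simpa using hzero
    exact hg (by nlinarith [sq_nonneg g])
  · push_neg at hex
    have hall : ∀ i ∈ Finset.range n, P ∣ f i := by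
      intro i hi
      rcases hcases i hi with h | h
      · exact h
      · by_contra hnd
        exact hnd (hex i hi h)
    have hPg : P ∣ g := hsum ▸ Finset.dvd_sum hall
    have : g = 0 := by
      refine Int.eq_zero_of_abs_lt_dvd hPg ?_
      have habs : |g| ≤ g ^ 2 := by nlinarith [abs_nonneg g, sq_abs g]
      nlinarith [sq_nonneg (n : ℤ)]
    exact hg this
end

section
/- For each integer k ≥ 1, let S(k) = {x ∈ ℤ : x ≡ 0 (mod 3^k) or x² ≡ 7 (mod 3^k)}. Then for every sequence m₀, m₁, m₂, … of positive integers, the sumset S(m₀)* + S(m₁)* + ⋯ + S(m_{3^{m₀}})* (with 3^{m₀} + 1 summands) equals all of ℤ. Consequently, for every sequence of members of the downward directed family F = {S(k) : k ≥ 1}, the set U(S(m₀), S(m₁), …) equals ℤ. -/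
open Pointwise

/-- `U(S₀,S₁,…) = ⋃ₙ (S₀* + ⋯ + S_{n-1}*)`, the `n = 0` term being `{0}`. -/
def Uset {G : Type*} [AddCommGroup G] (S : ℕ → Set G) : Set G :=
  ⋃ n : ℕ, ∑ i ∈ Finset.range n, Sstar (S i)

lemma sqrt7 : ∀ k : ℕ, 1 ≤ k → ∃ a : ℤ, (3:ℤ)^k ∣ a^2 - 7 := by
  intro k hk
  induction k, hk using Nat.le_induction with
  | base => exact ⟨1, by norm_num⟩
  | succ k hk ih =>
    obtain ⟨a, c, hc⟩ := ih
    obtain ⟨k', rfl⟩ := Nat.exists_eq_add_of_le hk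
    have h1 : (3:ℤ)^(1+k') = 3 * (3:ℤ)^k' := by ring
    have hd : (1:ℤ) + 2*a^2 = 3*(5 + 2*((3:ℤ)^k'*c)) := by
      rw [h1] at hc; linarith
    exact ⟨a + a*c*3^(1+k'), c*(5 + 2*((3:ℤ)^k'*c)) + (3:ℤ)^k'*a^2*c^2,
      by linear_combination hc + 3*(3:ℤ)^k'*c*hd⟩

lemma sz_of_dvd {k : ℕ} {x : ℤ} (h : (3:ℤ)^k ∣ x^2 - 7) : x ∈ SZ k :=
  Or.inr (Int.modEq_iff_dvd.mpr (dvd_sub_comm.mp h) : _)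

lemma sz_sub (k : ℕ) : SZ k ⊆ Sstar (SZ k) := fun x hx => Or.inl (Or.inl hx)

lemma mem_sum_sets {A : ℕ → Set ℤ} {f : ℕ → ℤ} :
    ∀ N : ℕ, (∀ i ∈ Finset.range N, f i ∈ A i) →
      (∑ i ∈ Finset.range N, f i) ∈ (∑ i ∈ Finset.range N, A i) := by
  intro N
  induction N with
  | zero => intro _; simp [Set.mem_zero]
  | succ n ih =>
    intro h
    rw [Finset.sum_range_succ, Finset.sum_range_succ]
    exact Set.add_mem_add (ih fun i hi => h i (Finset.mem_range.mpr
      (Nat.lt_succ_of_lt (Finset.mem_range.mp hi)))) (h n (by simp))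

theorem stmt8 (m : ℕ → ℕ) (hm : ∀ i, 1 ≤ m i) :
    (∑ i ∈ Finset.range (3 ^ m 0 + 1), Sstar (SZ (m i))) = (Set.univ : Set ℤ) ∧
    Uset (fun i => SZ (m i)) = (Set.univ : Set ℤ) := by
  set N := 3 ^ m 0 + 1 with hN
  have main : (∑ i ∈ Finset.range N, Sstar (SZ (m i))) = (Set.univ : Set ℤ) := by
    apply Set.eq_univ_of_forall
    intro t
    have hNpos : (Finset.range N).Nonempty := ⟨0, by simp [hN]⟩
    obtain ⟨i₀, hi₀mem, hmin⟩ := Finset.exists_min_image (Finset.range N) m hNpos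
    obtain ⟨iK, hiKmem, hmax⟩ := Finset.exists_max_image (Finset.range N) m hNpos
    obtain ⟨a, ha⟩ := sqrt7 (m iK) (hm iK)
    have haSZ : ∀ i ∈ Finset.range N, (3:ℤ)^(m i) ∣ a^2 - 7 := fun i hi =>
      dvd_trans (pow_dvd_pow 3 (hmax i hi)) ha
    have h3a : ¬ (3:ℤ) ∣ a := by
      intro h
      have h2 : (3:ℤ) ∣ a^2 - 7 := dvd_trans (dvd_trans (by norm_num) (pow_dvd_pow (3:ℤ) (hm iK))) ha
      have h7 : (3:ℤ) ∣ 7 := by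
        have : (3:ℤ) ∣ a^2 := h.mul_right a |>.trans (by ring_nf; exact dvd_refl _)
        omega
      norm_num at h7
    have hcop : IsCoprime ((3:ℤ)^(m i₀)) a := by
      refine IsCoprime.pow_left ?_
      rw [Int.isCoprime_iff_gcd_eq_one]
      exact Nat.Coprime.gcd_eq_one ((Nat.Prime.coprime_iff_not_dvd (by norm_num)).mpr
        (fun hh => h3a (by exact_mod_cast Int.natAbs_dvd_natAbs.mp (by simpa using hh))))
    obtain ⟨u, v, huv⟩ := hcop
    set P : ℤ := 3^(m i₀) with hP
    have hPpos : (0:ℤ) < P := pow_pos (by norm_num) _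
    set j0 : ℤ := (t * v) % P with hj0
    have hj0nn : 0 ≤ j0 := Int.emod_nonneg _ (ne_of_gt hPpos)
    have hj0lt : j0 < P := Int.emod_lt_of_pos _ hPpos
    set d : ℤ := t - j0 * a with hdd
    have hdvd : P ∣ d := by
      refine ⟨t*u + ((t*v)/P)*a, ?_⟩
      have hq : P * ((t*v)/P) + j0 = t*v := Int.mul_ediv_add_emod (t*v) P
      linear_combination -t*huv - a*hq
    set j : ℕ := j0.toNat with hj
    have hjc : (j:ℤ) = j0 := Int.toNat_of_nonneg hj0nn
    have hjN : j < N := by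
      have hle : P ≤ (3:ℤ)^(m 0) := pow_le_pow_right₀ (by norm_num) (hmin 0 (by simp [hN]))
      have : (j:ℤ) < (3:ℤ)^(m 0) + 1 := by omega
      have h3 : ((3^(m 0) + 1 : ℕ) : ℤ) = (3:ℤ)^(m 0) + 1 := by push_cast; ring
      rw [hN]; exact_mod_cast h3 ▸ this
    set f : ℕ → ℤ := fun i => (if i < j then a else 0) + (if i = i₀ then d else 0) with hf
    have hmem : ∀ i ∈ Finset.range N, f i ∈ Sstar (SZ (m i)) := by
      intro i hi
      apply sz_sub
      simp only [hf]
      split_ifs with h1 h2 h2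
      · subst h2
        apply sz_of_dvd
        have he : (a + d)^2 - 7 = (a^2 - 7) + d*(2*a + d) := by ring
        rw [he]
        exact dvd_add (haSZ i hi) (hdvd.mul_right _)
      · rw [add_zero]; exact sz_of_dvd (haSZ i hi)
      · subst h2; rw [zero_add]; exact Or.inl (by simpa using hdvd)
      · rw [add_zero]; exact Or.inl (dvd_zero _)
    have hsum : ∑ i ∈ Finset.range N, f i = t := by
      simp only [hf]
      rw [Finset.sum_add_distrib]
      have h1 : ∑ i ∈ Finset.range N, (if i < j then a else (0:ℤ)) = j * a := by
        have hfil : (Finset.range N).filter (fun i => i < j) = Finset.range j := by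
          ext x
          simp only [Finset.mem_filter, Finset.mem_range]
          omega
        rw [← Finset.sum_filter, hfil, Finset.sum_const, Finset.card_range, nsmul_eq_mul]
      have h2 : ∑ i ∈ Finset.range N, (if i = i₀ then d else (0:ℤ)) = d := by
        rw [Finset.sum_ite_eq' (Finset.range N) i₀ (fun _ => d), if_pos hi₀mem]
      rw [h1, h2, hjc, hdd]; ring
    exact hsum ▸ mem_sum_sets N hmem
  refine ⟨main, ?_⟩
  rw [Uset]
  apply Set.eq_univ_of_univ_subset
  rw [← main]
  exact Set.subset_iUnion (fun n => ∑ i ∈ Finset.range n, Sstar (SZ (m i))) N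
end

section
/- Let G be a group, X an infinite subset of G, and κ a regular infinite cardinal with κ ≤ card(X). Then the co-κ filter F on X is self-indulgent as a family of subsets of G. Moreover, if X is invariant under conjugation by elements of G, then F is closed under conjugation by elements of G (for all S ∈ F and g ∈ G, gSg⁻¹ ∈ F). -/
open Pointwise

universe u

/-- `S* = S ∪ {e} ∪ S⁻¹`. -/
def SstarM {G : Type u} [Group G] (S : Set G) : Set G := S ∪ {1} ∪ S⁻¹

/-- `F'` is a downward cofinal subset of `F` (ordered by inclusion). -/
def DownCofinalM {G : Type u} [Group G] (F' F : Set (Set G)) : Prop :=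
  F' ⊆ F ∧ ∀ S ∈ F, ∃ T ∈ F', T ⊆ S

/-- The family `(x T)_{T ∈ F''}`, indexed by `F''` ordered (downward) by inclusion,
converges strongly to `a` with respect to `F`: for every `S ∈ F` there is an index
`T ∈ F''` with `x T' * a⁻¹ ∈ S*` for every index `T' ∈ F''` with `T' ⊆ T`. -/
def ConvStrongM {G : Type u} [Group G] (F F'' : Set (Set G)) (x : Set G → G)
    (a : G) : Prop :=
  ∀ S ∈ F, ∃ T ∈ F'', ∀ T' ∈ F'', T' ⊆ T → x T' * a⁻¹ ∈ SstarM S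

/-- `F` is self-indulgent. -/
def SelfIndulgentM {G : Type u} [Group G] (F : Set (Set G)) : Prop :=
  ∀ S ∈ F, ∀ F' : Set (Set G), DownCofinalM F' F →
    ∀ x : Set G → G, (∀ T ∈ F', x T ∈ SstarM S) →
      ∃ a ∈ SstarM S, ∃ F'' : Set (Set G), DownCofinalM F'' F' ∧ ConvStrongM F F'' x a

/-- The conjugate `g S g⁻¹` of a subset `S`. -/
def conjSet {G : Type u} [Group G] (g : G) (S : Set G) : Set G :=
  (fun x => g * x * g⁻¹) '' S

theorem stmt15 {G : Type u} [Group G] (X : Set G) (hX : X.Infinite)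
    (κ : Cardinal.{u}) (hreg : κ.IsRegular) (hκ : κ ≤ Cardinal.mk X) :
    SelfIndulgentM {S : Set G | S ⊆ X ∧ Cardinal.mk ↥(X \ S) < κ} ∧
    ((∀ g : G, ∀ x ∈ X, g * x * g⁻¹ ∈ X) →
      ∀ S ∈ {S : Set G | S ⊆ X ∧ Cardinal.mk ↥(X \ S) < κ}, ∀ g : G,
        conjSet g S ∈ {S : Set G | S ⊆ X ∧ Cardinal.mk ↥(X \ S) < κ}) := by
  have hκ0 : (0 : Cardinal) < κ := hreg.pos
  have hXF : X ∈ {S : Set G | S ⊆ X ∧ Cardinal.mk ↥(X \ S) < κ} := by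
    refine ⟨subset_rfl, ?_⟩
    simp only [Set.diff_self]
    simpa using hκ0
  constructor
  · intro S hS F' hF' x hx
    by_cases hcase : ∃ a ∈ SstarM S, ∀ V ∈ F', ∃ T ∈ F', T ⊆ V ∧ x T = a
    · -- some value is attained cofinally: constant subnet
      obtain ⟨a, haS, ha⟩ := hcase
      refine ⟨a, haS, {T | T ∈ F' ∧ x T = a}, ⟨fun T hT => hT.1, ?_⟩, ?_⟩
      · intro V hV
        obtain ⟨T, hT, hTV, hxT⟩ := ha V hV
        exact ⟨T, ⟨hT, hxT⟩, hTV⟩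
      · intro U hU
        obtain ⟨V0, hV0, _⟩ := hF'.2 X hXF
        obtain ⟨T, hT, _, hxT⟩ := ha V0 hV0
        refine ⟨T, ⟨hT, hxT⟩, fun T' hT' _ => ?_⟩
        rw [hT'.2, mul_inv_cancel]
        exact Or.inl (Or.inr rfl)
    · -- no value attained cofinally: the net converges to 1 along all of F'
      push_neg at hcase
      have claim : ∀ a : G, ∃ V : Set G,
          (V ⊆ X ∧ Cardinal.mk ↥(X \ V) < κ) ∧ ∀ T ∈ F', T ⊆ V → x T ≠ a := by
        intro a
        by_cases haS : a ∈ SstarM S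
        · obtain ⟨V, hV, hVa⟩ := hcase a haS
          exact ⟨V, hF'.1 hV, fun T hT hTV => fun h => hVa T hT hTV h⟩
        · exact ⟨X, hXF, fun T hT _ h => haS (h ▸ hx T hT)⟩
      choose V hVF hVblock using claim
      refine ⟨1, Or.inl (Or.inr rfl), F',
        ⟨subset_rfl, fun T hT => ⟨T, hT, subset_rfl⟩⟩, ?_⟩
      intro U hU
      set B : Set G := (X \ U) ∪ (X \ U)⁻¹ with hBdef
      have hBκ : Cardinal.mk ↥B < κ := by
        refine lt_of_le_of_lt (Cardinal.mk_union_le _ _) ?_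
        have hinvcard : Cardinal.mk ↥((X \ U)⁻¹) = Cardinal.mk ↥(X \ U) := by
          rw [← Set.image_inv_eq_inv]
          exact Cardinal.mk_image_eq inv_injective
        rw [hinvcard]
        exact Cardinal.add_lt_of_lt hreg.aleph0_le hU.2 hU.2
      set W : Set G := X ∩ ⋂ b ∈ B, V b with hWdef
      have hWF : W ∈ {S : Set G | S ⊆ X ∧ Cardinal.mk ↥(X \ S) < κ} := by
        refine ⟨Set.inter_subset_left, ?_⟩
        have hsub : X \ W ⊆ ⋃ b ∈ B, (X \ V b) := by
          intro y hy
          rcases hy with ⟨hyX, hyW⟩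
          have : ¬ y ∈ ⋂ b ∈ B, V b := fun h => hyW ⟨hyX, h⟩
          rw [Set.mem_iInter₂] at this
          push_neg at this
          obtain ⟨b, hb, hyb⟩ := this
          exact Set.mem_biUnion hb ⟨hyX, hyb⟩
        refine lt_of_le_of_lt (Cardinal.mk_le_mk_of_subset hsub) ?_
        refine lt_of_le_of_lt (Cardinal.mk_biUnion_le _ _) ?_
        refine Cardinal.mul_lt_of_lt hreg.aleph0_le hBκ ?_
        exact Cardinal.iSup_lt_of_isRegular hreg hBκ fun b => (hVF b.1).2
      obtain ⟨T, hTF', hTW⟩ := hF'.2 W hWF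
      refine ⟨T, hTF', fun T' hT' hsub => ?_⟩
      rw [inv_one, mul_one]
      have hxT' := hx T' hT'
      have hblock : x T' ∉ B := by
        intro hb
        have hTV : T' ⊆ V (x T') :=
          hsub.trans ((hTW.trans Set.inter_subset_right).trans
            (Set.biInter_subset_of_mem hb))
        exact hVblock (x T') T' hT' hTV rfl
      rcases hxT' with (h | h) | h
      · by_cases hU' : x T' ∈ U
        · exact Or.inl (Or.inl hU')
        · exact absurd (Set.mem_union_left _ (show x T' ∈ X \ U from ⟨hS.1 h, hU'⟩)) hblock
      · exact Or.inl (Or.inr h)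
      · rw [Set.mem_inv] at h
        by_cases hU' : (x T')⁻¹ ∈ U
        · exact Or.inr (Set.mem_inv.mpr hU')
        · refine absurd (Set.mem_union_right _ ?_) hblock
          rw [Set.mem_inv]
          exact (show (x T')⁻¹ ∈ X \ U from ⟨hS.1 h, hU'⟩)
  · intro hinv S hS g
    have hconj : conjSet g S ⊆ X := by
      rintro _ ⟨s, hs, rfl⟩
      exact hinv g s (hS.1 hs)
    refine ⟨hconj, ?_⟩
    set f : G → G := fun y => g⁻¹ * y * g with hfdef
    have hfinj : Function.Injective f := by
      intro a b h
      simp only [hfdef] at h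
      exact mul_left_cancel (mul_right_cancel h)
    have hsub : f '' (X \ conjSet g S) ⊆ X \ S := by
      rintro _ ⟨y, ⟨hyX, hyC⟩, rfl⟩
      constructor
      · have := hinv g⁻¹ y hyX
        simpa [hfdef] using this
      · intro hfs
        apply hyC
        have hy : (fun x => g * x * g⁻¹) (f y) = y := by
          simp only [hfdef]
          group
        rw [conjSet]
        exact ⟨f y, hfs, hy⟩
    calc Cardinal.mk ↥(X \ conjSet g S)
        = Cardinal.mk ↥(f '' (X \ conjSet g S)) := (Cardinal.mk_image_eq hfinj).symm
      _ ≤ Cardinal.mk ↥(X \ S) := Cardinal.mk_le_mk_of_subset hsub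
      _ < κ := hS.2
end
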